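/- Let h : (0,∞) → (0,∞) be positive and non-decreasing, μ ∈ (0,1], and k > 0. If ∫_1^∞ h(kζ)^{−μ} ζ^{μ−1} dζ < ∞, then ∫_1^∞ dζ/h(kζ) < ∞. -/

import Mathlib

open MeasureTheory
open ENNReal

theorem finiteness_of_reciprocal_integral (h : ℝ → ℝ) (hpos : ∀ t > (0 : ℝ), 0 < h t)
    (hmono : ∀ t₁ t₂ : ℝ, 0 < t₁ → t₁ ≤ t₂ → h t₁ ≤ h t₂)
    (μ : ℝ) (hμ : 0 < μ) (hμ1 : μ ≤ 1) (k : ℝ) (hk : 0 < k)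
    (hfin : ∫⁻ ζ in Set.Ioi (1 : ℝ),
      ENNReal.ofReal (h (k * ζ) ^ (-μ) * ζ ^ (μ - 1)) < ⊤) :
    ∫⁻ ζ in Set.Ioi (1 : ℝ), ENNReal.ofReal (1 / h (k * ζ)) < ⊤ := by
  set g : ℝ → ℝ≥0∞ := fun ζ => ENNReal.ofReal (h (k * ζ) ^ (-μ) * ζ ^ (μ - 1)) with hgdef
  set ν : Measure ℝ := (volume.restrict (Set.Ioi (1 : ℝ))).withDensity g with hνdef
  have hνS : ∀ {S : Set ℝ}, MeasurableSet S → ν S = ∫⁻ ζ in S ∩ Set.Ioi 1, g ζ := by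
    intro S hS
    rw [hνdef, withDensity_apply _ hS, Measure.restrict_restrict hS]
  have hνfin : ν Set.univ ≠ ⊤ := by
    rw [hνS MeasurableSet.univ, Set.univ_inter]; exact hfin.ne
  -- key: a "bad" point ζ₀ forces mass ≥ 1/2 on (ζ₀/2, ζ₀]
  have key : ∀ ζ₀ : ℝ, 2 ≤ ζ₀ → h (k * ζ₀) < ζ₀ / 2 →
      ENNReal.ofReal (1 / 2) ≤ ν (Set.Ioc (ζ₀ / 2) ζ₀) := by
    intro ζ₀ hζ₀ hbad
    have h2 : (1 : ℝ) ≤ ζ₀ / 2 := by linarith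
    have hpos0 : (0 : ℝ) < ζ₀ := by linarith
    rw [hνS measurableSet_Ioc]
    have hsub : Set.Ioc (ζ₀ / 2) ζ₀ ∩ Set.Ioi 1 = Set.Ioc (ζ₀ / 2) ζ₀ := by
      apply Set.inter_eq_left.mpr
      intro s hs
      exact lt_of_le_of_lt h2 hs.1
    rw [hsub]
    have hpt : ∀ s ∈ Set.Ioc (ζ₀ / 2) ζ₀, ENNReal.ofReal (1 / ζ₀) ≤ g s := by
      intro s hs
      have hs1 : (1 : ℝ) < s := lt_of_le_of_lt h2 hs.1
      have hspos : (0 : ℝ) < s := by linarith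
      have hks : 0 < k * s := by positivity
      have hhs : 0 < h (k * s) := hpos _ hks
      have h1 : h (k * s) ≤ h (k * ζ₀) := hmono _ _ hks (by nlinarith [hs.2])
      have h2' : h (k * s) < ζ₀ / 2 := lt_of_le_of_lt h1 hbad
      have e1 : (ζ₀ / 2) ^ (-μ) ≤ h (k * s) ^ (-μ) :=
        Real.rpow_le_rpow_of_nonpos hhs h2'.le (by linarith)
      have e3 : ζ₀ ^ (-μ) ≤ (ζ₀ / 2) ^ (-μ) :=
        Real.rpow_le_rpow_of_nonpos (by linarith) (by linarith) (by linarith)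
      have e2 : ζ₀ ^ (μ - 1) ≤ s ^ (μ - 1) :=
        Real.rpow_le_rpow_of_nonpos hspos hs.2 (by linarith)
      have e4 : (1 : ℝ) / ζ₀ ≤ h (k * s) ^ (-μ) * s ^ (μ - 1) := by
        have heq : ζ₀ ^ (-μ) * ζ₀ ^ (μ - 1) = 1 / ζ₀ := by
          rw [← Real.rpow_add hpos0, show -μ + (μ - 1) = -1 by ring, Real.rpow_neg_one,
            one_div]
        calc (1 : ℝ) / ζ₀ = ζ₀ ^ (-μ) * ζ₀ ^ (μ - 1) := heq.symm
          _ ≤ h (k * s) ^ (-μ) * s ^ (μ - 1) :=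
              mul_le_mul (e3.trans e1) e2 (Real.rpow_nonneg hpos0.le _)
                (Real.rpow_nonneg hhs.le _)
      exact ENNReal.ofReal_le_ofReal e4
    calc ENNReal.ofReal (1 / 2)
        = ENNReal.ofReal (1 / ζ₀) * volume (Set.Ioc (ζ₀ / 2) ζ₀) := by
          rw [Real.volume_Ioc, ← ENNReal.ofReal_mul (by positivity)]
          congr 1
          field_simp
          ring
      _ = ∫⁻ _ in Set.Ioc (ζ₀ / 2) ζ₀, ENNReal.ofReal (1 / ζ₀) := (setLIntegral_const _ _).symm
      _ ≤ ∫⁻ s in Set.Ioc (ζ₀ / 2) ζ₀, g s := setLIntegral_mono' measurableSet_Ioc hpt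
  -- tail of ν tends to 0
  have hiInter : ⋂ n : ℕ, Set.Ioi ((n : ℝ)) = ∅ := by
    ext x
    simp only [Set.mem_iInter, Set.mem_Ioi, Set.mem_empty_iff_false, iff_false]
    push_neg
    obtain ⟨n, hn⟩ := exists_nat_gt x
    exact ⟨n, hn.le⟩
  have htail : Filter.Tendsto (fun n : ℕ => ν (Set.Ioi (n : ℝ))) Filter.atTop (nhds 0) := by
    have hT := tendsto_measure_iInter_atTop (μ := ν) (s := fun n : ℕ => Set.Ioi ((n : ℝ)))
      (fun n => measurableSet_Ioi.nullMeasurableSet)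
      (fun a b hab => Set.Ioi_subset_Ioi (by exact_mod_cast hab))
      ⟨0, ((measure_mono (Set.subset_univ _)).trans_lt hνfin.lt_top).ne⟩
    rw [hiInter, measure_empty] at hT
    exact hT
  have hev : ∀ᶠ n : ℕ in Filter.atTop, ν (Set.Ioi ((n : ℝ))) < ENNReal.ofReal (1 / 2) :=
    htail.eventually_lt_const (ENNReal.ofReal_pos.mpr (by norm_num))
  obtain ⟨N, hN⟩ := hev.exists
  set M : ℝ := max 2 (2 * ((N : ℝ) + 1)) with hMdef
  have hM2 : (2 : ℝ) ≤ M := le_max_left _ _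
  have hgood : ∀ ζ : ℝ, M < ζ → ζ / 2 ≤ h (k * ζ) := by
    intro ζ hζ
    by_contra hb
    push_neg at hb
    have h2ζ : (2 : ℝ) ≤ ζ := le_trans hM2 hζ.le
    have hkey := key ζ h2ζ hb
    have hMN : 2 * ((N : ℝ) + 1) ≤ M := le_max_right _ _
    have hsub : Set.Ioc (ζ / 2) ζ ⊆ Set.Ioi ((N : ℝ)) := by
      intro s hs
      have : (N : ℝ) < ζ / 2 := by linarith
      exact lt_of_lt_of_le this hs.1.le
    exact absurd (hkey.trans (measure_mono hsub)) (not_le.mpr hN)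
  -- split the integral
  have hsplit : Set.Ioi (1 : ℝ) = Set.Ioc 1 M ∪ Set.Ioi M :=
    (Set.Ioc_union_Ioi_eq_Ioi (by linarith : (1 : ℝ) ≤ M)).symm
  rw [hsplit, lintegral_union measurableSet_Ioi (Set.Ioc_disjoint_Ioi le_rfl)]
  apply ENNReal.add_lt_top.mpr
  constructor
  · -- bounded part on (1, M]
    have hb : ∀ ζ ∈ Set.Ioc (1 : ℝ) M,
        ENNReal.ofReal (1 / h (k * ζ)) ≤ ENNReal.ofReal (1 / h k) := by
      intro ζ hζ
      apply ENNReal.ofReal_le_ofReal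
      have hhk : 0 < h k := hpos k hk
      have : h k ≤ h (k * ζ) := hmono k (k * ζ) hk (by nlinarith [hζ.1])
      exact one_div_le_one_div_of_le hhk this
    calc ∫⁻ ζ in Set.Ioc (1 : ℝ) M, ENNReal.ofReal (1 / h (k * ζ))
        ≤ ∫⁻ _ in Set.Ioc (1 : ℝ) M, ENNReal.ofReal (1 / h k) :=
          setLIntegral_mono' measurableSet_Ioc hb
      _ = ENNReal.ofReal (1 / h k) * volume (Set.Ioc (1 : ℝ) M) := setLIntegral_const _ _
      _ < ⊤ := by
          rw [Real.volume_Ioc]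
          exact ENNReal.mul_lt_top ENNReal.ofReal_lt_top ENNReal.ofReal_lt_top
  · -- tail part on (M, ∞)
    have hb : ∀ ζ ∈ Set.Ioi M, ENNReal.ofReal (1 / h (k * ζ)) ≤ 2 * g ζ := by
      intro ζ hζ
      have hζM : M < ζ := hζ
      have hζpos : (0 : ℝ) < ζ := by linarith
      have hkζ : 0 < k * ζ := by positivity
      have hh : 0 < h (k * ζ) := hpos _ hkζ
      have hlow : ζ / 2 ≤ h (k * ζ) := hgood ζ hζM
      have e1 : h (k * ζ) ^ (μ - 1) ≤ (ζ / 2) ^ (μ - 1) :=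
        Real.rpow_le_rpow_of_nonpos (by linarith) hlow (by linarith)
      have e2 : (ζ / 2) ^ (μ - 1) ≤ 2 * ζ ^ (μ - 1) := by
        rw [Real.div_rpow hζpos.le (by norm_num : (0:ℝ) ≤ 2)]
        have h2pow : (1 : ℝ) / 2 ≤ 2 ^ (μ - 1) := by
          have := Real.rpow_le_rpow_of_exponent_le (by norm_num : (1:ℝ) ≤ 2)
            (by linarith : (-1 : ℝ) ≤ μ - 1)
          rwa [Real.rpow_neg_one, ← one_div] at this
        have hpow2 : (0 : ℝ) < (2:ℝ) ^ (μ - 1) := Real.rpow_pos_of_pos (by norm_num) _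
        rw [div_le_iff₀ hpow2]
        have hζnn : (0 : ℝ) ≤ ζ ^ (μ - 1) := Real.rpow_nonneg hζpos.le _
        nlinarith
      have main : 1 / h (k * ζ) ≤ 2 * (h (k * ζ) ^ (-μ) * ζ ^ (μ - 1)) := by
        have heq : h (k * ζ) ^ (-μ) * h (k * ζ) ^ (μ - 1) = 1 / h (k * ζ) := by
          rw [← Real.rpow_add hh, show -μ + (μ - 1) = -1 by ring, Real.rpow_neg_one,
            one_div]
        calc 1 / h (k * ζ) = h (k * ζ) ^ (-μ) * h (k * ζ) ^ (μ - 1) := heq.symm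
          _ ≤ h (k * ζ) ^ (-μ) * (2 * ζ ^ (μ - 1)) :=
              mul_le_mul_of_nonneg_left (e1.trans e2) (Real.rpow_nonneg hh.le _)
          _ = 2 * (h (k * ζ) ^ (-μ) * ζ ^ (μ - 1)) := by ring
      calc ENNReal.ofReal (1 / h (k * ζ))
          ≤ ENNReal.ofReal (2 * (h (k * ζ) ^ (-μ) * ζ ^ (μ - 1))) :=
            ENNReal.ofReal_le_ofReal main
        _ = 2 * g ζ := by
            rw [ENNReal.ofReal_mul (by norm_num : (0:ℝ) ≤ 2)]
            norm_num [hgdef]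
    calc ∫⁻ ζ in Set.Ioi M, ENNReal.ofReal (1 / h (k * ζ))
        ≤ ∫⁻ ζ in Set.Ioi M, 2 * g ζ := setLIntegral_mono' measurableSet_Ioi hb
      _ = 2 * ∫⁻ ζ in Set.Ioi M, g ζ := lintegral_const_mul' 2 g (by norm_num)
      _ ≤ 2 * ∫⁻ ζ in Set.Ioi 1, g ζ := by
          gcongr
          linarith
      _ < ⊤ := ENNReal.mul_lt_top (by norm_num) hfin
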